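/- For an integer k ≥ 2, define g_k(x) = (1/2)·(1 − (1 − k x²)/(2 − x)²) and h_k(x) = (1/2)·(1 − (1 − (1 − x)²/k)/(2 − x)²). Then min over x ∈ [0, 1] of max{g_k(x), h_k(x)} equals g_k(1/(k+1)); in particular, for every x ∈ [0, 1], max{g_k(x), h_k(x)} ≥ g_k(1/(k+1)). -/

import Mathlib

/-- The function `g_k(x) = (1/2)(1 - (1 - k x²)/(2 - x)²)`. -/
noncomputable def gfun (k : ℕ) (x : ℝ) : ℝ :=
  (1 / 2) * (1 - (1 - (k : ℝ) * x ^ 2) / (2 - x) ^ 2)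

/-- The function `h_k(x) = (1/2)(1 - (1 - (1 - x)²/k)/(2 - x)²)`. -/
noncomputable def hfun (k : ℕ) (x : ℝ) : ℝ :=
  (1 / 2) * (1 - (1 - (1 - x) ^ 2 / (k : ℝ)) / (2 - x) ^ 2)

lemma geqh (k : ℕ) (hk : 2 ≤ k) : gfun k (1 / ((k:ℝ)+1)) = hfun k (1 / ((k:ℝ)+1)) := by
  have hc : (2:ℝ) ≤ (k:ℝ) := by exact_mod_cast hk
  have h1 : (k:ℝ) + 1 ≠ 0 := by linarith
  have h0 : (k:ℝ) ≠ 0 := by linarith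
  have e1 : (k:ℝ) * (1/((k:ℝ)+1))^2 = (1 - 1/((k:ℝ)+1))^2 / (k:ℝ) := by
    field_simp; ring
  unfold gfun hfun
  rw [e1]

lemma gmono (k : ℕ) (hk : 2 ≤ k) {x : ℝ} (hx1 : 1 / ((k:ℝ)+1) ≤ x) (hx2 : x ≤ 1) :
    gfun k (1 / ((k:ℝ)+1)) ≤ gfun k x := by
  have hc : (2:ℝ) ≤ (k:ℝ) := by exact_mod_cast hk
  set c : ℝ := (k:ℝ) with hcdef
  have h1 : (0:ℝ) < c + 1 := by linarith
  have hx0 : 0 < x := lt_of_lt_of_le (by positivity) hx1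
  have hax : 1 ≤ x * (c+1) := by
    rw [div_le_iff₀ h1] at hx1; linarith
  have hd1 : (0:ℝ) < (2 - x) ^ 2 := by nlinarith
  have hd2 : (0:ℝ) < (2 - 1/(c+1)) ^ 2 := by
    have : 1/(c+1) ≤ 1 := by rw [div_le_one h1]; linarith
    nlinarith
  unfold gfun
  have key : (1 - c * x ^ 2) / (2 - x) ^ 2 ≤
      (1 - c * (1/(c+1)) ^ 2) / (2 - 1/(c+1)) ^ 2 := by
    rw [div_le_div_iff₀ hd1 hd2]
    have hne : (c+1) ≠ 0 := ne_of_gt h1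
    field_simp
    have h2' : 0 ≤ (4*c^3+5*c^2+2*c+1)*x - 3*(c+1) := by
      nlinarith [mul_nonneg (sub_nonneg.2 hax) (by nlinarith : (0:ℝ) ≤ 4*c^3+5*c^2+2*c+1)]
    nlinarith [mul_nonneg (mul_nonneg (sub_nonneg.2 hax) h2') (le_of_lt h1)]
  linarith

lemma hmono (k : ℕ) (hk : 2 ≤ k) {x : ℝ} (hx1 : 0 ≤ x) (hx2 : x ≤ 1 / ((k:ℝ)+1)) :
    hfun k (1 / ((k:ℝ)+1)) ≤ hfun k x := by
  have hc : (2:ℝ) ≤ (k:ℝ) := by exact_mod_cast hk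
  set c : ℝ := (k:ℝ) with hcdef
  have h1 : (0:ℝ) < c + 1 := by linarith
  have hax : x * (c+1) ≤ 1 := by
    rw [le_div_iff₀ h1] at hx2; linarith
  have hxle1 : x ≤ 1 := by nlinarith
  have hd1 : (0:ℝ) < (2 - x) ^ 2 := by nlinarith
  have hd2 : (0:ℝ) < (2 - 1/(c+1)) ^ 2 := by
    have : 1/(c+1) ≤ 1 := by rw [div_le_one h1]; linarith
    nlinarith
  unfold hfun
  have key : (1 - (1-x) ^ 2 / c) / (2 - x) ^ 2 ≤
      (1 - (1 - 1/(c+1)) ^ 2 / c) / (2 - 1/(c+1)) ^ 2 := by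
    rw [div_le_div_iff₀ hd1 hd2]
    have hne : (c+1) ≠ 0 := ne_of_gt h1
    have hk0 : c ≠ 0 := by linarith
    field_simp
    have h2' : 0 ≤ (4*c^2+7*c+1)*(c+1) - (c^3+5*c^2+5*c+1)*x := by
      nlinarith [mul_nonneg (sub_nonneg.2 hax) (by nlinarith : (0:ℝ) ≤ c^3+5*c^2+5*c+1),
        mul_nonneg hx1 (by nlinarith : (0:ℝ) ≤ c^3+5*c^2+5*c+1)]
    nlinarith [mul_nonneg (mul_nonneg (sub_nonneg.2 hax) h2') (le_of_lt h1)]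
  linarith

theorem stmt15 (k : ℕ) (hk : 2 ≤ k) :
    IsLeast ((fun x => max (gfun k x) (hfun k x)) '' Set.Icc (0 : ℝ) 1)
      (gfun k (1 / ((k : ℝ) + 1))) ∧
    ∀ x ∈ Set.Icc (0 : ℝ) 1, gfun k (1 / ((k : ℝ) + 1)) ≤ max (gfun k x) (hfun k x) := by
  have hc : (2:ℝ) ≤ (k:ℝ) := by exact_mod_cast hk
  have h1 : (0:ℝ) < (k:ℝ) + 1 := by linarith
  have ha0 : (0:ℝ) ≤ 1 / ((k:ℝ)+1) := by positivity
  have ha1 : 1 / ((k:ℝ)+1) ≤ 1 := by rw [div_le_one h1]; linarith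
  have lb : ∀ x ∈ Set.Icc (0 : ℝ) 1, gfun k (1 / ((k : ℝ) + 1)) ≤ max (gfun k x) (hfun k x) := by
    rintro x ⟨hx0, hx1⟩
    rcases le_total x (1 / ((k:ℝ)+1)) with h | h
    · exact le_trans (by rw [geqh k hk]; exact hmono k hk hx0 h) (le_max_right _ _)
    · exact le_trans (gmono k hk h hx1) (le_max_left _ _)
  refine ⟨⟨⟨1 / ((k:ℝ)+1), ⟨ha0, ha1⟩, ?_⟩, ?_⟩, lb⟩
  swap
  · rintro y ⟨x, hx, rfl⟩; exact lb x hx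
  simp only
  rw [← geqh k hk, max_self]
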